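/- Let M be a finite regular left duo monoid, K a field, and e an idempotent of M. Set M_{≥e} = {m ∈ M | e ∈ MmM}. Then M_{≥e} is a submonoid of M whose complement M \ M_{≥e} is a two-sided ideal of M, the K-linear map ρ : KM → K[M_{≥e}] determined on basis elements by ρ(m) = m if m ∈ M_{≥e} and ρ(m) = 0 otherwise is a surjective K-algebra homomorphism, and K[M_{≥e}], regarded as a KM-module via ρ, is a projective KM-module. -/

import Mathlib

/-- Let `M` be a finite regular left duo monoid, `K` a field and `e` an
idempotent.  Then `M_{≥e} = {m | e ∈ MmM}` is a submonoid whose complement is a two-sided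
ideal, the `K`-linear map `ρ : KM → K[M_{≥e}]` killing the complement and fixing `M_{≥e}`
is a surjective `K`-algebra homomorphism, and `K[M_{≥e}]`, regarded as a `KM`-module via
`ρ`, is projective. -/
theorem stmt_12 (M : Type*) [Monoid M] [Fintype M] (K : Type*) [Field K]
    (hreg : ∀ a : M, ∃ x : M, a * x * a = a)
    (hld : ∀ m x : M, ∃ y : M, m * x = y * m)
    (e : M) (he : IsIdempotentElem e) :
    ∃ S : Submonoid M, (S : Set M) = {m : M | ∃ a b : M, a * m * b = e} ∧
      (∀ m x : M, m ∉ S → x * m ∉ S ∧ m * x ∉ S) ∧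
      ∃ ρ : MonoidAlgebra K M →ₐ[K] MonoidAlgebra K ↥S,
        Function.Surjective ρ ∧
        (∀ (m : M) (h : m ∈ S),
          ρ (MonoidAlgebra.of K M m) = MonoidAlgebra.of K ↥S ⟨m, h⟩) ∧
        (∀ m : M, m ∉ S → ρ (MonoidAlgebra.of K M m) = 0) ∧
        (letI : Module (MonoidAlgebra K M) (MonoidAlgebra K ↥S) :=
          Module.compHom (MonoidAlgebra K ↥S) ρ.toRingHom
         Module.Projective (MonoidAlgebra K M) (MonoidAlgebra K ↥S)) := by
  classical
  -- idempotents satisfy `f * m * f = f * m`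
  have hcent : ∀ f m : M, f * f = f → f * m * f = f * m := by
    intro f m hf
    obtain ⟨y, hy⟩ := hld f m
    rw [hy, mul_assoc, hf]
  -- membership is a one-sided condition
  have hmem_iff : ∀ m : M, (∃ a b : M, a * m * b = e) ↔ ∃ p : M, p * m = e := by
    intro m
    constructor
    · rintro ⟨a, b, hab⟩
      obtain ⟨y, hy⟩ := hld m b
      exact ⟨a * y, by rw [mul_assoc, ← hy, ← mul_assoc, hab]⟩
    · rintro ⟨p, hp⟩
      exact ⟨p, 1, by rw [mul_one, hp]⟩
  set Sc : Set M := {m : M | ∃ a b : M, a * m * b = e} with hSc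
  have hone : (1 : M) ∈ Sc := ⟨e, e, by rw [mul_one, he]⟩
  have hmul : ∀ {m n : M}, m ∈ Sc → n ∈ Sc → m * n ∈ Sc := by
    intro m n hm hn
    obtain ⟨p, hp⟩ := (hmem_iff m).1 hm
    obtain ⟨q, hq⟩ := (hmem_iff n).1 hn
    obtain ⟨y, hy⟩ := hld m q
    refine (hmem_iff _).2 ⟨p * y, ?_⟩
    calc p * y * (m * n) = p * (y * m) * n := by
          rw [mul_assoc p y (m * n), ← mul_assoc y m n, ← mul_assoc p (y*m) n]
      _ = p * m * (q * n) := by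
          rw [← hy, ← mul_assoc, ← mul_assoc, mul_assoc (p*m) q n]
      _ = e := by rw [hp, hq, he]
  let S : Submonoid M :=
    { carrier := Sc
      one_mem' := hone
      mul_mem' := fun ha hb => hmul ha hb }
  have hSmem : ∀ m : M, m ∈ S ↔ m ∈ Sc := fun m => Iff.rfl
  have hideal : ∀ m x : M, m ∉ S → x * m ∉ S ∧ m * x ∉ S := by
    intro m x hm
    constructor
    · rintro ⟨a, b, hab⟩
      exact hm ⟨a * x, b, by rw [mul_assoc a x m]; exact hab⟩
    · rintro ⟨a, b, hab⟩
      exact hm ⟨a, x * b, by rw [← mul_assoc, mul_assoc a m x]; exact hab⟩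
  -- the monoid hom `M → K[S]`
  let φ : M →* MonoidAlgebra K ↥S :=
    { toFun := fun m => if h : m ∈ S then MonoidAlgebra.of K ↥S ⟨m, h⟩ else 0
      map_one' := by
        show (if h : (1 : M) ∈ S then MonoidAlgebra.of K ↥S ⟨1, h⟩ else 0) = 1
        rw [dif_pos S.one_mem]; exact map_one (MonoidAlgebra.of K ↥S)
      map_mul' := by
        intro m n
        show (if h : m * n ∈ S then MonoidAlgebra.of K ↥S ⟨m * n, h⟩ else 0) =
          (if h : m ∈ S then MonoidAlgebra.of K ↥S ⟨m, h⟩ else 0) *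
          (if h : n ∈ S then MonoidAlgebra.of K ↥S ⟨n, h⟩ else 0)
        by_cases hm : m ∈ S
        · by_cases hn : n ∈ S
          · rw [dif_pos (S.mul_mem hm hn), dif_pos hm, dif_pos hn, ← map_mul]
            rfl
          · rw [dif_neg hn, dif_neg ((hideal n m hn).1), mul_zero]
        · rw [dif_neg hm, dif_neg ((hideal m n hm).2), zero_mul] }
  have hφpos : ∀ (m : M) (h : m ∈ S), φ m = MonoidAlgebra.of K ↥S ⟨m, h⟩ := fun m h => dif_pos h
  have hφneg : ∀ (m : M), m ∉ S → φ m = 0 := fun m h => dif_neg h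
  let ρ : MonoidAlgebra K M →ₐ[K] MonoidAlgebra K ↥S := MonoidAlgebra.lift K _ M φ
  have hρof : ∀ m : M, ρ (MonoidAlgebra.of K M m) = φ m := fun m => MonoidAlgebra.lift_of φ m
  -- the embedding `K[S] → K[M]`
  let ι : MonoidAlgebra K ↥S →ₐ[K] MonoidAlgebra K M :=
    MonoidAlgebra.lift K _ ↥S ((MonoidAlgebra.of K M).comp S.subtype)
  have hιof : ∀ s : ↥S, ι (MonoidAlgebra.of K ↥S s) = MonoidAlgebra.of K M (s : M) :=
    fun s => MonoidAlgebra.lift_of _ s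
  have hρι : ∀ z : MonoidAlgebra K ↥S, ρ (ι z) = z := by
    have : ρ.comp ι = AlgHom.id K (MonoidAlgebra K ↥S) := by
      apply MonoidAlgebra.algHom_ext
      intro s
      have h1 : (MonoidAlgebra.single s (1:K) : MonoidAlgebra K ↥S) = MonoidAlgebra.of K ↥S s := rfl
      rw [h1]
      show ρ (ι (MonoidAlgebra.of K ↥S s)) = MonoidAlgebra.of K ↥S s
      rw [hιof, hρof, hφpos _ s.2]
      exact Subsingleton.elim _ _
    intro z
    exact DFunLike.congr_fun this z
  have hsurj : Function.Surjective ρ := fun z => ⟨ι z, hρι z⟩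
  -- the idempotents outside `S`
  let EF : Finset M := Finset.univ.filter (fun f => f * f = f ∧ f ∉ S)
  let L : List M := EF.toList
  let w : MonoidAlgebra K M := (L.map (fun f => 1 - MonoidAlgebra.of K M f)).prod
  have hB : ∀ (L' : List M) (f : M), f * f = f → f ∈ L' → ∀ m : M,
      MonoidAlgebra.of K M (f * m) *
        (L'.map (fun g => 1 - MonoidAlgebra.of K M g)).prod = 0 := by
    intro L'
    induction L' with
    | nil => intro f _ hf m; exact absurd hf List.not_mem_nil
    | cons g L ih =>
      intro f hf hmem m
      rw [List.map_cons, List.prod_cons]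
      rcases List.mem_cons.1 hmem with h | h
      · subst h
        have h0 : MonoidAlgebra.of K M (f * m) * (1 - MonoidAlgebra.of K M f) = 0 := by
          rw [mul_sub, mul_one, ← map_mul, hcent f m hf, sub_self]
        rw [← mul_assoc, h0, zero_mul]
      · have h1 := ih f hf h m
        have h2 := ih f hf h (m * g)
        rw [← mul_assoc, mul_sub, mul_one, ← map_mul, mul_assoc f m g, sub_mul, h1, h2, sub_zero]
  have hA : ∀ t : M, t ∉ S → MonoidAlgebra.of K M t * w = 0 := by
    intro t ht
    obtain ⟨x, hx⟩ := hreg t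
    have hf : (x * t) * (x * t) = x * t := by
      rw [mul_assoc x t (x * t), ← mul_assoc t x t, hx]
    have hfS : (x * t) ∉ S := by
      rintro ⟨a, b, hab⟩
      exact ht ⟨a * x, b, by rw [mul_assoc a x t]; exact hab⟩
    have hmemL : (x * t) ∈ L := by
      rw [Finset.mem_toList, Finset.mem_filter]
      exact ⟨Finset.mem_univ _, hf, hfS⟩
    have h0 : MonoidAlgebra.of K M (x * t) * w = 0 := by
      have := hB L (x * t) hf hmemL 1
      rwa [mul_one] at this
    have htf : t * (x * t) = t := by rw [← mul_assoc, hx]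
    have : MonoidAlgebra.of K M t * w
        = MonoidAlgebra.of K M t * (MonoidAlgebra.of K M (x * t) * w) := by
      rw [← mul_assoc, ← map_mul, htf]
    rw [this, h0, mul_zero]
  have hρw : ρ w = 1 := by
    have : ∀ L' : List M, (∀ g ∈ L', g ∉ S) →
        ρ ((L'.map (fun g => 1 - MonoidAlgebra.of K M g)).prod) = 1 := by
      intro L'
      induction L' with
      | nil => intro _; simp
      | cons g L ih =>
        intro hg
        rw [List.map_cons, List.prod_cons, map_mul, map_sub, map_one, hρof,
          hφneg g (hg g List.mem_cons_self), sub_zero, one_mul,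
          ih (fun a ha => hg a (List.mem_cons_of_mem g ha))]
    refine this L ?_
    intro g hg
    exact ((Finset.mem_filter.1 (Finset.mem_toList.1 hg)).2).2
  have hF : ∀ x : MonoidAlgebra K M, x * w = ι (ρ x) * w := by
    intro x
    induction x using MonoidAlgebra.induction_on with
    | of m =>
      rw [hρof]
      by_cases hm : m ∈ S
      · rw [hφpos m hm, hιof]
      · rw [hφneg m hm, map_zero, zero_mul, hA m hm]
    | add f g hfih hgih => rw [add_mul, map_add, map_add, add_mul, hfih, hgih]
    | smul r f hfih => rw [smul_mul_assoc, map_smul, map_smul, smul_mul_assoc, hfih]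
  refine ⟨S, rfl, hideal, ρ, hsurj, ?_, ?_, ?_⟩
  · intro m h
    rw [hρof, hφpos m h]
  · intro m h
    rw [hρof, hφneg m h]
  · letI mod : Module (MonoidAlgebra K M) (MonoidAlgebra K ↥S) :=
      Module.compHom (MonoidAlgebra K ↥S) ρ.toRingHom
    have hsmul : ∀ (c : MonoidAlgebra K M) (y : MonoidAlgebra K ↥S), c • y = ρ c * y :=
      fun c y => rfl
    let ρₗ : MonoidAlgebra K M →ₗ[MonoidAlgebra K M] MonoidAlgebra K ↥S :=
      { toFun := ρ
        map_add' := fun a b => map_add ρ a b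
        map_smul' := fun c x => by
          show ρ (c * x) = ρ c * ρ x
          exact map_mul ρ c x }
    let σ : MonoidAlgebra K ↥S →ₗ[MonoidAlgebra K M] MonoidAlgebra K M :=
      { toFun := fun z => ι z * w
        map_add' := fun a b => by show ι (a + b) * w = ι a * w + ι b * w; rw [map_add, add_mul]
        map_smul' := fun c z => by
          show ι (ρ c * z) * w = c * (ι z * w)
          calc ι (ρ c * z) * w = ι (ρ c * ρ (ι z)) * w := by rw [hρι]
            _ = ι (ρ (c * ι z)) * w := by rw [map_mul ρ c (ι z)]
            _ = (c * ι z) * w := (hF (c * ι z)).symm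
            _ = c * (ι z * w) := mul_assoc _ _ _ }
    refine Module.Projective.of_split σ ρₗ ?_
    apply LinearMap.ext
    intro z
    show ρ (ι z * w) = z
    rw [map_mul, hρι, hρw, mul_one]
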